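/- Proposition (d-fold convolution, case a = 1, b = 2): let c : ℕ → ℚ be a sequence and define p̂(m,ℓ) := (1/(m+ℓ+1))·C(m+ℓ+1, ℓ)·P_c(m,ℓ) for m, ℓ ∈ ℕ (so p̂(0,0) = 1 and p̂(m,0) = 0 for m > 0). Then for all integers d ≥ 1 and all n, k ∈ ℕ, ∑ p̂(m_1,ℓ_1)···p̂(m_d,ℓ_d) = (d/(n+k+d))·C(n+k+d, k)·P_c(n,k), where the sum ranges over all d-tuples (ℓ_1,…,ℓ_d) of nonnegative integers with ℓ_1+⋯+ℓ_d = k and all d-tuples (m_1,…,m_d) of nonnegative integers with m_1+⋯+m_d = n. -/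

import Mathlib

/-- Weighted composition sum `P_c(n,k) = ∑ c_{m_1}⋯c_{m_k}` over compositions of `n`
into `k` positive parts; equals `(k!/n!)·B_{n,k}(1!c_1, 2!c_2, …)`. -/
def Pc (c : ℕ → ℚ) (n k : ℕ) : ℚ :=
  ∑ f ∈ (Finset.Nat.antidiagonalTuple k n).filter (fun f => ∀ i, 0 < f i),
    ∏ i, c (f i)

/-- `p̂(m,ℓ) = (1/(m+ℓ+1))·C(m+ℓ+1, ℓ)·P_c(m,ℓ)` (case `a = 1`, `b = 2`). -/
def phat (c : ℕ → ℚ) (m ℓ : ℕ) : ℚ :=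
  (1 / ((m + ℓ + 1 : ℕ) : ℚ)) * (((m + ℓ + 1).choose ℓ : ℕ) : ℚ) * Pc c m ℓ

open Finset Finset.Nat

/-- `c` with the 0th entry zeroed out. -/
def cz (c : ℕ → ℚ) (m : ℕ) : ℚ := if m = 0 then 0 else c m

/-- Unfiltered composition sum using `cz`. -/
def Pcz (c : ℕ → ℚ) (n k : ℕ) : ℚ :=
  ∑ f ∈ Finset.Nat.antidiagonalTuple k n, ∏ i, cz c (f i)

lemma Pc_eq_Pcz (c : ℕ → ℚ) (n k : ℕ) : Pc c n k = Pcz c n k := by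
  rw [Pc, Pcz,
    ← Finset.sum_filter_add_sum_filter_not (antidiagonalTuple k n) (fun f => ∀ i, 0 < f i)]
  have h1 : ∑ f ∈ (antidiagonalTuple k n).filter (fun f => ∀ i, 0 < f i), ∏ i, c (f i)
      = ∑ f ∈ (antidiagonalTuple k n).filter (fun f => ∀ i, 0 < f i), ∏ i, cz c (f i) := by
    refine Finset.sum_congr rfl fun f hf => Finset.prod_congr rfl fun i _ => ?_
    rw [Finset.mem_filter] at hf
    have := hf.2 i
    rw [cz, if_neg (by omega)]
  have h2 : ∑ f ∈ (antidiagonalTuple k n).filter (fun f => ¬ ∀ i, 0 < f i),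
      ∏ i, cz c (f i) = 0 := by
    refine Finset.sum_eq_zero fun f hf => ?_
    rw [Finset.mem_filter] at hf
    push_neg at hf
    obtain ⟨i, hi⟩ := hf.2
    exact Finset.prod_eq_zero (Finset.mem_univ i) (by rw [cz, if_pos (by omega)])
  rw [h1, h2, add_zero]

lemma Pcz_zero (c : ℕ → ℚ) (n : ℕ) : Pcz c n 0 = if n = 0 then 1 else 0 := by
  cases n <;> simp [Pcz]

/-- Peeling the first coordinate off an antidiagonal tuple sum. -/
lemma sum_AT_succ {M : Type*} [AddCommMonoid M] (k n : ℕ) (F : (Fin (k+1) → ℕ) → M) :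
    ∑ f ∈ antidiagonalTuple (k+1) n, F f
      = ∑ p ∈ antidiagonal n, ∑ g ∈ antidiagonalTuple k p.2, F (Fin.cons p.1 g) := by
  rw [Finset.sum_sigma']
  refine Finset.sum_nbij' (i := fun f => ⟨(f 0, ∑ i, Fin.tail f i), Fin.tail f⟩)
    (j := fun x => Fin.cons x.1.1 x.2) ?_ ?_ ?_ ?_ ?_
  · intro f hf
    rw [Finset.Nat.mem_antidiagonalTuple] at hf
    simp only [Finset.mem_sigma, Finset.HasAntidiagonal.mem_antidiagonal, Finset.Nat.mem_antidiagonalTuple]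
    refine ⟨?_, trivial⟩
    rw [← hf, Fin.sum_univ_succ]
    rfl
  · intro x hx
    rw [Finset.mem_sigma, Finset.HasAntidiagonal.mem_antidiagonal,
      Finset.Nat.mem_antidiagonalTuple] at hx
    rw [Finset.Nat.mem_antidiagonalTuple, Fin.sum_cons, hx.2]; exact hx.1
  · intro f _; exact Fin.cons_self_tail f
  · intro x hx
    rw [Finset.mem_sigma, Finset.HasAntidiagonal.mem_antidiagonal,
      Finset.Nat.mem_antidiagonalTuple] at hx
    refine Sigma.ext ?_ (heq_of_eq ?_)
    · simp only [Fin.cons_zero, Fin.tail_cons, hx.2]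
    · simp [Fin.tail_cons]
  · intro f _; rw [Fin.cons_self_tail]

lemma Pcz_succ (c : ℕ → ℚ) (n k : ℕ) :
    Pcz c n (k+1) = ∑ p ∈ antidiagonal n, cz c p.1 * Pcz c p.2 k := by
  rw [Pcz, sum_AT_succ]
  refine Finset.sum_congr rfl fun p _ => ?_
  rw [Pcz, Finset.mul_sum]
  refine Finset.sum_congr rfl fun g _ => ?_
  rw [Fin.prod_univ_succ]
  simp [Fin.cons_zero, Fin.cons_succ]

lemma weight_sum (c : ℕ → ℚ) (n k : ℕ) :
    ((k : ℚ) + 1) * ∑ p ∈ antidiagonal n, (p.1 : ℚ) * (cz c p.1 * Pcz c p.2 k)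
      = (n : ℚ) * Pcz c n (k+1) := by
  set T : Fin (k+1) → ℚ :=
    fun i => ∑ f ∈ antidiagonalTuple (k+1) n, (f i : ℚ) * ∏ j, cz c (f j) with hT
  have key : ∀ i, T i = T 0 := by
    intro i
    rw [hT]
    refine Finset.sum_nbij' (i := fun f => f ∘ Equiv.swap 0 i)
      (j := fun f => f ∘ Equiv.swap 0 i) ?_ ?_ ?_ ?_ ?_
    · intro f hf
      rw [Finset.Nat.mem_antidiagonalTuple] at *
      rw [← hf]
      exact Equiv.sum_comp (Equiv.swap 0 i) f
    · intro f hf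
      rw [Finset.Nat.mem_antidiagonalTuple] at *
      rw [← hf]
      exact Equiv.sum_comp (Equiv.swap 0 i) f
    · intro f _
      funext j
      simp [Function.comp, Equiv.swap_apply_self]
    · intro f _
      funext j
      simp [Function.comp, Equiv.swap_apply_self]
    · intro f _
      simp only [Function.comp_apply, Equiv.swap_apply_left]
      congr 1
      exact (Equiv.prod_comp (Equiv.swap 0 i) (fun j => cz c (f j))).symm
  have sumT : ∑ i, T i = (n : ℚ) * Pcz c n (k+1) := by
    rw [hT, Finset.sum_comm, Pcz, Finset.mul_sum]
    refine Finset.sum_congr rfl fun f hf => ?_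
    rw [Finset.Nat.mem_antidiagonalTuple] at hf
    rw [← Finset.sum_mul, ← Nat.cast_sum, hf]
  have T0 : T 0 = ∑ p ∈ antidiagonal n, (p.1 : ℚ) * (cz c p.1 * Pcz c p.2 k) := by
    rw [hT]
    show ∑ f ∈ antidiagonalTuple (k+1) n, ((f 0 : ℚ) * ∏ j, cz c (f j)) = _
    rw [sum_AT_succ]
    refine Finset.sum_congr rfl fun p _ => ?_
    rw [Pcz, Finset.mul_sum, Finset.mul_sum]
    refine Finset.sum_congr rfl fun g _ => ?_
    rw [Fin.prod_univ_succ]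
    simp [Fin.cons_zero, Fin.cons_succ, mul_assoc]
  have : ∑ i, T i = ((k : ℚ) + 1) * T 0 := by
    rw [Finset.sum_congr rfl fun i _ => key i, Finset.sum_const, Finset.card_univ,
      Fintype.card_fin, nsmul_eq_mul]
    push_cast
    ring
  rw [← T0, ← this, sumT]

/-- `Q_p(n,k) = (p/(n+k+p))·C(n+k+p,k)·P(n,k)`, with `Q_0 = δ`. -/
def Qv (c : ℕ → ℚ) (p n k : ℕ) : ℚ :=
  if p = 0 then (if n = 0 ∧ k = 0 then 1 else 0)
  else ((p : ℚ) / ((n + k + p : ℕ) : ℚ)) * (((n + k + p).choose k : ℕ) : ℚ) * Pcz c n k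

lemma Qv_k0 (c : ℕ → ℚ) (p n : ℕ) : Qv c p n 0 = if n = 0 then 1 else 0 := by
  cases p with
  | zero => simp [Qv]
  | succ p =>
    cases n with
    | zero =>
      rw [Qv, if_neg (Nat.succ_ne_zero p), Pcz_zero, if_pos rfl]
      norm_num
      exact Nat.cast_add_one_ne_zero p
    | succ n => simp [Qv, Pcz_zero]

lemma Qv_succ_k (c : ℕ → ℚ) (p n k : ℕ) :
    Qv c p n (k+1) = ((p : ℚ) / ((n + (k+1) + p : ℕ) : ℚ))
      * (((n + (k+1) + p).choose (k+1) : ℕ) : ℚ) * Pcz c n (k+1) := by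
  cases p with
  | zero => simp [Qv]
  | succ p => rw [Qv, if_neg (Nat.succ_ne_zero p)]

lemma scalar_id (s n k : ℕ) :
    ((s:ℚ)+1) * ((n:ℚ)+k+s+1) * ((k:ℚ)+1) * (((n+k+s+2).choose (k+1) : ℕ) : ℚ)
      = (s:ℚ) * ((n:ℚ)+k+s+2) * ((k:ℚ)+1) * (((n+k+s+1).choose (k+1) : ℕ) : ℚ)
        + ((n:ℚ)+k+s+2) * (((n+k+s+1).choose k : ℕ) : ℚ)
          * (((s:ℚ)+1)*((k:ℚ)+1)+(n:ℚ)) := by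
  have h1 := Nat.add_one_mul_choose_eq (n+k+s+1) k
  have h2 := Nat.choose_succ_right_eq (n+k+s+1) k
  have h3 : n + k + s + 1 - k = n + s + 1 := by omega
  rw [h3] at h2
  have h1c : ((n:ℚ)+k+s+2) * (((n+k+s+1).choose k : ℕ) : ℚ)
      = (((n+k+s+2).choose (k+1) : ℕ) : ℚ) * ((k:ℚ)+1) := by
    exact_mod_cast congrArg (Nat.cast : ℕ → ℚ) h1
  have h2c : (((n+k+s+1).choose (k+1) : ℕ) : ℚ) * ((k:ℚ)+1)
      = (((n+k+s+1).choose k : ℕ) : ℚ) * ((n:ℚ)+s+1) := by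
    exact_mod_cast congrArg (Nat.cast : ℕ → ℚ) h2
  linear_combination (-((s:ℚ)+1) * ((n:ℚ)+k+s+1)) * h1c + (-(s:ℚ) * ((n:ℚ)+k+s+2)) * h2c

lemma scalar_id' (s n k : ℕ) :
    ((s:ℚ)+1)/((n:ℚ)+k+s+2) * (((n+k+s+2).choose (k+1) : ℕ) : ℚ)
      = (s:ℚ)/((n:ℚ)+k+s+1) * (((n+k+s+1).choose (k+1) : ℕ) : ℚ)
        + (((n+k+s+1).choose k : ℕ) : ℚ)/((n:ℚ)+k+s+1)
          * (((s:ℚ)+1) + (n:ℚ)/((k:ℚ)+1)) := by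
  have hM : ((n:ℚ)+k+s+1) ≠ 0 := by positivity
  have hN : ((n:ℚ)+k+s+2) ≠ 0 := by positivity
  have hk : ((k:ℚ)+1) ≠ 0 := by positivity
  have hsc := scalar_id s n k
  field_simp
  linear_combination hsc

lemma Qv_rec (c : ℕ → ℚ) (s n k : ℕ) :
    Qv c (s+1) n (k+1)
      = Qv c s n (k+1) + ∑ x ∈ antidiagonal n, cz c x.1 * Qv c (s+1+x.1) x.2 k := by
  have hstep : ∀ x ∈ antidiagonal n, cz c x.1 * Qv c (s+1+x.1) x.2 k
      = (((n+k+s+1).choose k : ℕ) : ℚ) / ((n+k+s+1 : ℕ) : ℚ)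
        * (((s:ℚ) + 1 + (x.1:ℚ)) * (cz c x.1 * Pcz c x.2 k)) := by
    intro x hx
    rw [Finset.HasAntidiagonal.mem_antidiagonal] at hx
    have h2 : x.2 + k + (s+1+x.1) = n+k+s+1 := by omega
    rw [Qv, if_neg (by omega), h2]
    push_cast
    ring
  have hsum : ∑ x ∈ antidiagonal n, cz c x.1 * Qv c (s+1+x.1) x.2 k
      = (((n+k+s+1).choose k : ℕ) : ℚ) / ((n+k+s+1 : ℕ) : ℚ)
        * (((s:ℚ)+1) * Pcz c n (k+1) + (n:ℚ) * Pcz c n (k+1) / ((k:ℚ)+1)) := by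
    rw [Finset.sum_congr rfl hstep, ← Finset.mul_sum]
    congr 1
    have e1 : ∑ x ∈ antidiagonal n, (((s:ℚ) + 1 + (x.1:ℚ)) * (cz c x.1 * Pcz c x.2 k))
        = ((s:ℚ)+1) * (∑ x ∈ antidiagonal n, cz c x.1 * Pcz c x.2 k)
          + ∑ x ∈ antidiagonal n, (x.1:ℚ) * (cz c x.1 * Pcz c x.2 k) := by
      rw [Finset.mul_sum, ← Finset.sum_add_distrib]
      exact Finset.sum_congr rfl fun x _ => by ring
    rw [e1, ← Pcz_succ]
    congr 1
    have hw := weight_sum c n k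
    have hk : ((k:ℚ)+1) ≠ 0 := by positivity
    field_simp
    simp only [mul_assoc]
    linear_combination hw
  rw [hsum, Qv_succ_k c (s+1) n k, Qv_succ_k c s n k]
  have e2 : n + (k+1) + (s+1) = n+k+s+2 := by omega
  have e3 : n + (k+1) + s = n+k+s+1 := by omega
  rw [e2, e3]
  have hsc := scalar_id' s n k
  push_cast
  linear_combination (Pcz c n (k+1)) * hsc

/-- Associativity of iterated antidiagonal sums. -/
lemma AD_assoc {M : Type*} [AddCommMonoid M] (n : ℕ) (f : ℕ → ℕ → ℕ → M) :
    ∑ x ∈ antidiagonal n, ∑ y ∈ antidiagonal x.1, f y.1 y.2 x.2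
      = ∑ x ∈ antidiagonal n, ∑ y ∈ antidiagonal x.2, f x.1 y.1 y.2 := by
  rw [Finset.sum_sigma', Finset.sum_sigma']
  refine Finset.sum_nbij' (i := fun z => ⟨(z.2.1, z.2.2 + z.1.2), (z.2.2, z.1.2)⟩)
    (j := fun z => ⟨(z.1.1 + z.2.1, z.2.2), (z.1.1, z.2.1)⟩) ?_ ?_ ?_ ?_ ?_
  · rintro ⟨⟨x1,x2⟩,⟨y1,y2⟩⟩ hz
    dsimp only
    simp only [Finset.mem_sigma, Finset.HasAntidiagonal.mem_antidiagonal] at *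
    exact ⟨by omega, trivial⟩
  · rintro ⟨⟨x1,x2⟩,⟨y1,y2⟩⟩ hz
    dsimp only
    simp only [Finset.mem_sigma, Finset.HasAntidiagonal.mem_antidiagonal] at *
    exact ⟨by omega, trivial⟩
  · rintro ⟨⟨x1,x2⟩,⟨y1,y2⟩⟩ hz
    simp only [Finset.mem_sigma, Finset.HasAntidiagonal.mem_antidiagonal] at hz
    obtain ⟨h1, h2⟩ := hz
    subst h2
    rfl
  · rintro ⟨⟨x1,x2⟩,⟨y1,y2⟩⟩ hz
    simp only [Finset.mem_sigma, Finset.HasAntidiagonal.mem_antidiagonal] at hz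
    obtain ⟨h1, h2⟩ := hz
    subst h2
    rfl
  · intro z _
    rfl

lemma Qv_conv (c : ℕ → ℚ) :
    ∀ k p q n, ∑ x ∈ antidiagonal k, ∑ y ∈ antidiagonal n,
        Qv c p y.1 x.1 * Qv c q y.2 x.2 = Qv c (p+q) n k := by
  intro k
  induction k with
  | zero =>
    intro p q n
    rw [Finset.Nat.antidiagonal_zero, Finset.sum_singleton]
    simp only [Qv_k0]
    cases n with
    | zero => simp
    | succ n =>
      rw [if_neg (Nat.succ_ne_zero n)]
      refine Finset.sum_eq_zero fun y hy => ?_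
      rw [Finset.HasAntidiagonal.mem_antidiagonal] at hy
      by_cases h : y.1 = 0
      · rw [if_neg (show ¬(y.2 = 0) by omega), mul_zero]
      · rw [if_neg h, zero_mul]
  | succ k ihk =>
    intro p
    induction p with
    | zero =>
      intro q n
      rw [Finset.Nat.sum_antidiagonal_succ]
      have h0 : ∀ x ∈ antidiagonal k, ∑ y ∈ antidiagonal n,
          Qv c 0 y.1 (x.1+1) * Qv c q y.2 x.2 = 0 := by
        intro x _
        refine Finset.sum_eq_zero fun y _ => ?_
        rw [Qv, if_pos rfl, if_neg (by omega), zero_mul]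
      rw [Finset.sum_congr rfl h0, Finset.sum_const, smul_zero, add_zero]
      have h1 : ∀ y ∈ antidiagonal n, Qv c 0 y.1 0 * Qv c q y.2 (k+1)
          = if y.1 = 0 then Qv c q y.2 (k+1) else 0 := by
        intro y _
        rw [Qv, if_pos rfl]
        by_cases hy : y.1 = 0
        · rw [if_pos hy, if_pos ⟨hy, rfl⟩, one_mul]
        · rw [if_neg hy, if_neg (by simp [hy]), zero_mul]
      rw [Finset.sum_congr rfl h1, Finset.sum_eq_single (0, n)]
      · rw [if_pos rfl, zero_add]
      · intro b hb hne
        rw [Finset.HasAntidiagonal.mem_antidiagonal] at hb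
        have hb1 : b.1 ≠ 0 := by
          intro h
          exact hne (Prod.ext h (by omega))
        rw [if_neg hb1]
      · intro h
        exact absurd (Finset.HasAntidiagonal.mem_antidiagonal.mpr (zero_add n)) h
    | succ p ihp =>
      intro q n
      -- split Qv c (p+1) y.1 x.1 by the recurrence (k1 = 0 and k1 = k1'+1 cases)
      have split : ∀ x ∈ antidiagonal (k+1), ∀ y ∈ antidiagonal n,
          Qv c (p+1) y.1 x.1 * Qv c q y.2 x.2
            = Qv c p y.1 x.1 * Qv c q y.2 x.2
              + (if x.1 = 0 then 0 else
                  (∑ z ∈ antidiagonal y.1, cz c z.1 * Qv c (p+1+z.1) z.2 (x.1-1))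
                    * Qv c q y.2 x.2) := by
        intro x _ y _
        cases hx1 : x.1 with
        | zero =>
          rw [if_pos rfl, add_zero, Qv_k0, Qv_k0]
        | succ k1 =>
          rw [if_neg (Nat.succ_ne_zero k1), Qv_rec c p y.1 k1]
          simp only [Nat.add_sub_cancel]
          ring
      rw [Finset.sum_congr rfl fun x hx => Finset.sum_congr rfl fun y hy =>
        split x hx y hy]
      simp only [Finset.sum_add_distrib]
      rw [ihp q n]
      -- second piece
      have second : ∑ x ∈ antidiagonal (k+1), ∑ y ∈ antidiagonal n,
          (if x.1 = 0 then 0 else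
            (∑ z ∈ antidiagonal y.1, cz c z.1 * Qv c (p+1+z.1) z.2 (x.1-1))
              * Qv c q y.2 x.2)
          = ∑ z ∈ antidiagonal n, cz c z.1 * Qv c (p+q+1+z.1) z.2 k := by
        rw [Finset.Nat.sum_antidiagonal_succ]
        simp only [eq_self_iff_true, if_true, Nat.succ_ne_zero, if_false,
          Nat.add_sub_cancel]
        rw [Finset.sum_const_zero, zero_add]
        -- now: ∑ x ∈ antidiagonal k, ∑ y ∈ antidiagonal n, (∑ z ∈ AD y.1, ...) * Qv q y.2 x.2
        have swap : ∀ x ∈ antidiagonal k, ∑ y ∈ antidiagonal n,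
            (∑ z ∈ antidiagonal y.1, cz c z.1 * Qv c (p+1+z.1) z.2 x.1)
              * Qv c q y.2 x.2
            = ∑ y ∈ antidiagonal n, cz c y.1 *
                ∑ z ∈ antidiagonal y.2, Qv c (p+1+y.1) z.1 x.1 * Qv c q z.2 x.2 := by
          intro x _
          have e1 : ∀ y ∈ antidiagonal n,
              (∑ z ∈ antidiagonal y.1, cz c z.1 * Qv c (p+1+z.1) z.2 x.1)
                * Qv c q y.2 x.2
              = ∑ z ∈ antidiagonal y.1,
                  cz c z.1 * (Qv c (p+1+z.1) z.2 x.1 * Qv c q y.2 x.2) := by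
            intro y _
            rw [Finset.sum_mul]
            exact Finset.sum_congr rfl fun z _ => by ring
          refine (Finset.sum_congr rfl e1).trans ?_
          refine (AD_assoc n
            (fun a b d => cz c a * (Qv c (p+1+a) b x.1 * Qv c q d x.2))).trans ?_
          exact Finset.sum_congr rfl fun y _ => by rw [Finset.mul_sum]
        rw [Finset.sum_congr rfl swap, Finset.sum_comm]
        refine Finset.sum_congr rfl fun y _ => ?_
        rw [← Finset.mul_sum]
        congr 1
        have := ihk (p+1+y.1) q y.2
        rw [this]
        congr 1
        omega
      rw [second, ← Qv_rec c (p+q) n k]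
      congr 1
      omega

lemma phat_eq (c : ℕ → ℚ) (m ℓ : ℕ) : phat c m ℓ = Qv c 1 m ℓ := by
  rw [phat, Qv, if_neg one_ne_zero, Pc_eq_Pcz]
  norm_num

lemma dfold (c : ℕ → ℚ) : ∀ d n k,
    ∑ ℓs ∈ antidiagonalTuple d k, ∑ ms ∈ antidiagonalTuple d n,
      ∏ i, phat c (ms i) (ℓs i) = Qv c d n k := by
  intro d
  induction d with
  | zero =>
    intro n k
    rw [Qv, if_pos rfl]
    cases k with
    | zero =>
      cases n with
      | zero => simp
      | succ n => simp
    | succ k => simp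
  | succ d ih =>
    intro n k
    rw [sum_AT_succ d k
      (fun ℓs => ∑ ms ∈ antidiagonalTuple (d+1) n, ∏ i, phat c (ms i) (ℓs i))]
    have inner : ∀ x ∈ antidiagonal k, ∀ g ∈ antidiagonalTuple d x.2,
        ∑ ms ∈ antidiagonalTuple (d+1) n, ∏ i, phat c (ms i) ((Fin.cons x.1 g : Fin (d+1) → ℕ) i)
          = ∑ y ∈ antidiagonal n, phat c y.1 x.1 *
              ∑ h ∈ antidiagonalTuple d y.2, ∏ i, phat c (h i) (g i) := by
      intro x _ g _
      rw [sum_AT_succ d n (fun ms => ∏ i, phat c (ms i) ((Fin.cons x.1 g : Fin (d+1) → ℕ) i))]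
      refine Finset.sum_congr rfl fun y _ => ?_
      rw [Finset.mul_sum]
      refine Finset.sum_congr rfl fun h _ => ?_
      rw [Fin.prod_univ_succ]
      simp [Fin.cons_zero, Fin.cons_succ]
    rw [Finset.sum_congr rfl fun x hx =>
      Finset.sum_congr rfl fun g hg => inner x hx g hg]
    have step2 : ∀ x ∈ antidiagonal k,
        ∑ g ∈ antidiagonalTuple d x.2, ∑ y ∈ antidiagonal n, (phat c y.1 x.1 *
            ∑ h ∈ antidiagonalTuple d y.2, ∏ i, phat c (h i) (g i))
          = ∑ y ∈ antidiagonal n, Qv c 1 y.1 x.1 * Qv c d y.2 x.2 := by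
      intro x _
      rw [Finset.sum_comm]
      refine Finset.sum_congr rfl fun y _ => ?_
      rw [← Finset.mul_sum, phat_eq, ih y.2 x.2]
    rw [Finset.sum_congr rfl step2, Qv_conv c k 1 d n, add_comm 1 d]

/-- Proposition: `d`-fold convolution formula (case `a = 1`, `b = 2`). -/
theorem phat_dfold_convolution (c : ℕ → ℚ) (d : ℕ) (hd : 1 ≤ d) (n k : ℕ) :
    ∑ ℓs ∈ Finset.Nat.antidiagonalTuple d k,
      ∑ ms ∈ Finset.Nat.antidiagonalTuple d n,
        ∏ i, phat c (ms i) (ℓs i)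
    = ((d : ℚ) / ((n + k + d : ℕ) : ℚ)) * (((n + k + d).choose k : ℕ) : ℚ) * Pc c n k := by
  rw [dfold c d n k, Qv, if_neg (by omega), ← Pc_eq_Pcz]
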